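/- There exists a bounded linear operator L : Ψ → V such that ū(φ + ψ) = ū(φ) + Lψ for all φ, ψ ∈ Ψ (so the map φ ↦ ū(φ) is affine and everywhere Gâteaux differentiable with derivative L); the operator L is characterized by the equation ⟪C(e(Lψ)), e v⟫_Ψ = ⟪Cψ, e v⟫_Ψ for all v ∈ V and ψ ∈ Ψ. -/
import Mathlib


open scoped RealInnerProductSpace

/-- Affinity and Gâteaux differentiability of the minimizer map `φ ↦ ū(φ)`:
there is a bounded linear operator `L : Ψ → V` with `ū(φ + ψ) = ū(φ) + L ψ`,
characterized by `⟪C (e (L ψ)), e v⟫ = ⟪C ψ, e v⟫` for all `v ∈ V`. -/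
theorem stmt_1
    {X Ψ : Type*}
    [NormedAddCommGroup X] [InnerProductSpace ℝ X] [CompleteSpace X]
    [NormedAddCommGroup Ψ] [InnerProductSpace ℝ Ψ] [CompleteSpace Ψ]
    (V : Submodule ℝ X) (hV : IsClosed (V : Set X))
    (e : X →L[ℝ] Ψ) (C : Ψ →L[ℝ] Ψ)
    (hCsym : ∀ φ ψ : Ψ, ⟪C φ, ψ⟫ = ⟪φ, C ψ⟫)
    (cstar : ℝ) (hcstar : 0 < cstar)
    (hCcoer : ∀ ψ : Ψ, cstar * ‖ψ‖ ^ 2 ≤ ⟪C ψ, ψ⟫)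
    (c₀ : ℝ) (hc₀ : 0 < c₀)
    (hacoer : ∀ v ∈ V, c₀ * ‖v‖ ^ 2 ≤ ⟪C (e v), e v⟫)
    (ℓ : X →L[ℝ] ℝ) (g : X) (α : ℝ) (hα : 0 ≤ α)
    (E : X → Ψ → ℝ)
    (hE : ∀ u φ, E u φ =
      (1 / 2) * ⟪C (e u - φ), e u - φ⟫ + (α / 2) * ‖φ‖ ^ 2 - ℓ u)
    (ubar : Ψ → X)
    (hubar_mem : ∀ φ : Ψ, ubar φ - g ∈ V)
    (hubar_weak : ∀ φ : Ψ, ∀ v ∈ V, ⟪C (e (ubar φ) - φ), e v⟫ = ℓ v)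
    (hubar_min : ∀ φ : Ψ, ∀ v : X, v - g ∈ V → E (ubar φ) φ ≤ E v φ) :
    ∃ L : Ψ →L[ℝ] X,
      (∀ ψ : Ψ, L ψ ∈ V) ∧
      (∀ φ ψ : Ψ, ubar (φ + ψ) = ubar φ + L ψ) ∧
      (∀ ψ : Ψ, ∀ v ∈ V, ⟪C (e (L ψ)), e v⟫ = ⟪C ψ, e v⟫) := by
  -- uniqueness lemma
  have key : ∀ w : X, w ∈ V → (∀ v ∈ V, ⟪C (e w), e v⟫ = 0) → w = 0 := by
    intro w hw h
    have h1 := hacoer w hw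
    rw [h w hw] at h1
    have h2 : ‖w‖ ^ 2 ≤ 0 := le_of_mul_le_mul_left (by rw [mul_zero]; exact h1) hc₀
    have h3 : ‖w‖ ^ 2 = 0 := le_antisymm h2 (sq_nonneg _)
    exact norm_eq_zero.mp (sq_eq_zero_iff.mp h3)
  set L0 : Ψ → X := fun ψ => ubar ψ - ubar 0 with hL0
  have memV : ∀ ψ, L0 ψ ∈ V := by
    intro ψ
    have := V.sub_mem (hubar_mem ψ) (hubar_mem 0)
    simpa [hL0, sub_sub_sub_cancel_right] using this
  have weak : ∀ ψ, ∀ v ∈ V, ⟪C (e (L0 ψ)), e v⟫ = ⟪C ψ, e v⟫ := by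
    intro ψ v hv
    have h1 := hubar_weak ψ v hv
    have h2 := hubar_weak 0 v hv
    simp only [hL0, map_sub, sub_zero, inner_sub_left] at h1 h2 ⊢
    linarith
  have shift : ∀ φ ψ, ubar (φ + ψ) = ubar φ + L0 ψ := by
    intro φ ψ
    have hw : ubar (φ + ψ) - ubar φ - L0 ψ ∈ V := by
      have h1 := V.sub_mem (hubar_mem (φ + ψ)) (hubar_mem φ)
      have h2 := V.sub_mem h1 (memV ψ)
      simpa [sub_sub_sub_cancel_right] using h2
    have hz : ubar (φ + ψ) - ubar φ - L0 ψ = 0 := by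
      apply key _ hw
      intro v hv
      have h1 := hubar_weak (φ + ψ) v hv
      have h2 := hubar_weak φ v hv
      have h3 := weak ψ v hv
      simp only [hL0, map_sub, map_add, sub_zero, inner_sub_left, inner_add_left] at h1 h2 h3 ⊢
      linarith
    have hz' : ubar (φ + ψ) - (ubar φ + L0 ψ) = 0 := by rw [← sub_sub]; exact hz
    exact sub_eq_zero.mp hz'
  have hadd : ∀ ψ₁ ψ₂, L0 (ψ₁ + ψ₂) = L0 ψ₁ + L0 ψ₂ := by
    intro ψ₁ ψ₂
    have hw : L0 (ψ₁ + ψ₂) - L0 ψ₁ - L0 ψ₂ ∈ V :=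
      V.sub_mem (V.sub_mem (memV _) (memV _)) (memV _)
    have hz : L0 (ψ₁ + ψ₂) - L0 ψ₁ - L0 ψ₂ = 0 := by
      apply key _ hw
      intro v hv
      have h1 := weak (ψ₁ + ψ₂) v hv
      have h2 := weak ψ₁ v hv
      have h3 := weak ψ₂ v hv
      simp only [map_sub, map_add, inner_sub_left, inner_add_left] at h1 h2 h3 ⊢
      linarith
    have hz' : L0 (ψ₁ + ψ₂) - (L0 ψ₁ + L0 ψ₂) = 0 := by rw [← sub_sub]; exact hz
    exact sub_eq_zero.mp hz'
  have hsmul : ∀ (c : ℝ) (ψ : Ψ), L0 (c • ψ) = c • L0 ψ := by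
    intro c ψ
    have hw : L0 (c • ψ) - c • L0 ψ ∈ V := V.sub_mem (memV _) (V.smul_mem c (memV ψ))
    have hz : L0 (c • ψ) - c • L0 ψ = 0 := by
      apply key _ hw
      intro v hv
      have h1 := weak (c • ψ) v hv
      have h2 := weak ψ v hv
      simp only [map_sub, map_smul, inner_sub_left, inner_smul_left,
        RCLike.ofReal_real_eq_id, id_eq, real_inner_smul_left] at h1 h2 ⊢
      rw [h1, h2]; ring
    exact sub_eq_zero.mp hz
  have hbound : ∀ ψ, ‖L0 ψ‖ ≤ (‖C‖ * ‖e‖ / c₀) * ‖ψ‖ := by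
    intro ψ
    have h1 := hacoer (L0 ψ) (memV ψ)
    have h2 : ⟪C (e (L0 ψ)), e (L0 ψ)⟫ = ⟪C ψ, e (L0 ψ)⟫ := weak ψ (L0 ψ) (memV ψ)
    have h3 : ⟪C ψ, e (L0 ψ)⟫ ≤ ‖C ψ‖ * ‖e (L0 ψ)‖ := real_inner_le_norm _ _
    have h4 : ‖C ψ‖ ≤ ‖C‖ * ‖ψ‖ := C.le_opNorm ψ
    have h5 : ‖e (L0 ψ)‖ ≤ ‖e‖ * ‖L0 ψ‖ := e.le_opNorm _
    have h6 : ‖C ψ‖ * ‖e (L0 ψ)‖ ≤ (‖C‖ * ‖ψ‖) * (‖e‖ * ‖L0 ψ‖) :=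
      mul_le_mul h4 h5 (norm_nonneg _) (by positivity)
    have h7 : c₀ * ‖L0 ψ‖ ^ 2 ≤ ‖C‖ * ‖e‖ * ‖ψ‖ * ‖L0 ψ‖ := by nlinarith
    rcases eq_or_lt_of_le (norm_nonneg (L0 ψ)) with h | h
    · rw [← h]; positivity
    · rw [div_mul_eq_mul_div, le_div_iff₀ hc₀]
      nlinarith [h7]
  let Llin : Ψ →ₗ[ℝ] X := { toFun := L0, map_add' := hadd, map_smul' := hsmul }
  let L : Ψ →L[ℝ] X := Llin.mkContinuous (‖C‖ * ‖e‖ / c₀) hbound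
  refine ⟨L, memV, shift, weak⟩
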